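/- Let M be a matroid on a finite ground set E with rank function r, and let x : E → ℝ be a point of the matroid polytope P(M). If A ⊆ E and B ⊆ E are both tight with respect to x (i.e. ∑_{e∈A} x_e = r(A) and ∑_{e∈B} x_e = r(B)), then A ∩ B and A ∪ B are also tight with respect to x, i.e. ∑_{e∈A∩B} x_e = r(A∩B) and ∑_{e∈A∪B} x_e = r(A∪B). -/

import Mathlib

open scoped BigOperators Classical

/-- The rank function of a matroid: `mrank M S` is the maximum cardinality of an
independent subset of `S`. -/
noncomputable def mrank {α : Type*} (M : Matroid α) (S : Set α) : ℕ :=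
  sSup {n : ℕ | ∃ I : Finset α, ↑I ⊆ S ∧ M.Indep ↑I ∧ I.card = n}

section Aux

variable {α : Type*} [Fintype α] [DecidableEq α] {M : Matroid α}

private lemma mrank_bdd (M : Matroid α) (S : Set α) :
    BddAbove {n : ℕ | ∃ I : Finset α, ↑I ⊆ S ∧ M.Indep ↑I ∧ I.card = n} := by
  refine ⟨Fintype.card α, ?_⟩
  rintro n ⟨I, -, -, rfl⟩
  exact Finset.card_le_univ I

private lemma le_mrank {I : Finset α} {S : Set α} (hI : M.Indep ↑I) (hIS : ↑I ⊆ S) :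
    I.card ≤ mrank M S :=
  le_csSup (mrank_bdd M S) ⟨I, hIS, hI, rfl⟩

private lemma exists_mrank_witness (M : Matroid α) (S : Set α) :
    ∃ I : Finset α, ↑I ⊆ S ∧ M.Indep ↑I ∧ I.card = mrank M S := by
  have hne : {n : ℕ | ∃ I : Finset α, ↑I ⊆ S ∧ M.Indep ↑I ∧ I.card = n}.Nonempty :=
    ⟨0, ∅, by simp [M.empty_indep]⟩
  exact Nat.sSup_mem hne (mrank_bdd M S)

private lemma mrank_eq_of_basis' {J : Finset α} {S : Set α} (hJ : M.IsBasis' ↑J S) :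
    mrank M S = J.card := by
  refine le_antisymm ?_ (le_mrank hJ.indep hJ.subset)
  obtain ⟨I, hIS, hI, hIcard⟩ := exists_mrank_witness M S
  obtain ⟨I', hI', hII'⟩ := hI.subset_isBasis'_of_subset hIS
  have h1 : (↑I : Set α).encard ≤ I'.encard := Set.encard_mono hII'
  have h2 : I'.encard = (↑J : Set α).encard := hI'.encard_eq_encard hJ
  rw [h2, Set.encard_coe_eq_coe_finsetCard, Set.encard_coe_eq_coe_finsetCard] at h1
  rw [← hIcard]
  exact_mod_cast h1

private lemma mrank_submodular (M : Matroid α) (A B : Finset α) :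
    mrank M ↑(A ∩ B) + mrank M ↑(A ∪ B) ≤ mrank M ↑A + mrank M ↑B := by
  obtain ⟨I₀, hI₀S, hI₀, hI₀card⟩ := exists_mrank_witness M ↑(A ∩ B)
  have hsub : (↑I₀ : Set α) ⊆ ↑(A ∪ B) := by
    refine hI₀S.trans ?_
    intro a ha
    simp only [Finset.coe_inter, Set.mem_inter_iff, Finset.mem_coe] at ha
    simp [ha.1]
  obtain ⟨J, hJ, hI₀J⟩ := hI₀.subset_isBasis'_of_subset hsub
  have hJfin : J.Finite := Set.toFinite J
  set Jf := hJfin.toFinset with hJf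
  have hJfc : (↑Jf : Set α) = J := hJfin.coe_toFinset
  have hJbasis : M.IsBasis' (↑Jf) ↑(A ∪ B) := by rw [hJfc]; exact hJ
  have hJAB : Jf ⊆ A ∪ B := by
    intro a ha
    have : a ∈ (↑(A ∪ B) : Set α) := hJbasis.subset (by exact_mod_cast ha)
    exact_mod_cast this
  have hunion : mrank M ↑(A ∪ B) = Jf.card := mrank_eq_of_basis' hJbasis
  have hJA : (Jf ∩ A).card ≤ mrank M ↑A := by
    refine le_mrank (hJbasis.indep.subset ?_) ?_
    · intro a ha
      simp only [Finset.coe_inter, Set.mem_inter_iff] at ha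
      exact ha.1
    · intro a ha
      simp only [Finset.coe_inter, Set.mem_inter_iff, Finset.mem_coe] at ha ⊢
      exact ha.2
  have hJB : (Jf ∩ B).card ≤ mrank M ↑B := by
    refine le_mrank (hJbasis.indep.subset ?_) ?_
    · intro a ha
      simp only [Finset.coe_inter, Set.mem_inter_iff] at ha
      exact ha.1
    · intro a ha
      simp only [Finset.coe_inter, Set.mem_inter_iff, Finset.mem_coe] at ha ⊢
      exact ha.2
  have hIJcap : I₀ ⊆ Jf ∩ (A ∩ B) := by
    intro a ha
    refine Finset.mem_inter.2 ⟨?_, ?_⟩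
    · have : a ∈ J := hI₀J (by exact_mod_cast ha)
      simpa [hJf] using this
    · exact_mod_cast hI₀S (by exact_mod_cast ha)
  have hinter : mrank M ↑(A ∩ B) ≤ (Jf ∩ (A ∩ B)).card := by
    rw [← hI₀card]; exact Finset.card_le_card hIJcap
  have hcard : (Jf ∩ A ∩ (Jf ∩ B)).card + (Jf ∩ A ∪ Jf ∩ B).card
      = (Jf ∩ A).card + (Jf ∩ B).card := Finset.card_inter_add_card_union _ _
  have e1 : Jf ∩ A ∩ (Jf ∩ B) = Jf ∩ (A ∩ B) := by
    ext a; simp; tauto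
  have e2 : Jf ∩ A ∪ Jf ∩ B = Jf := by
    ext a
    simp only [Finset.mem_union, Finset.mem_inter]
    constructor
    · tauto
    · intro h
      have := hJAB h
      simp only [Finset.mem_union] at this
      tauto
  rw [e1, e2] at hcard
  omega

end Aux

theorem tight_sets_closed_under_inter_union
    {α : Type*} [Fintype α] [DecidableEq α] (M : Matroid α) (hE : M.E = Set.univ)
    (x : α → ℝ) (hx0 : ∀ e, 0 ≤ x e)
    (hxP : ∀ S : Finset α, ∑ e ∈ S, x e ≤ (mrank M ↑S : ℝ))
    (A B : Finset α)
    (hA : ∑ e ∈ A, x e = (mrank M ↑A : ℝ))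
    (hB : ∑ e ∈ B, x e = (mrank M ↑B : ℝ)) :
    ∑ e ∈ A ∩ B, x e = (mrank M ↑(A ∩ B) : ℝ) ∧
      ∑ e ∈ A ∪ B, x e = (mrank M ↑(A ∪ B) : ℝ) := by
  have hsum : ∑ e ∈ A ∩ B, x e + ∑ e ∈ A ∪ B, x e = ∑ e ∈ A, x e + ∑ e ∈ B, x e := by
    have h1 : A ∪ B = A ∪ (B \ A) := by
      ext a; simp
    have h2 : B = (A ∩ B) ∪ (B \ A) := by
      ext a; simp; tauto
    have hu : ∑ e ∈ A ∪ B, x e = ∑ e ∈ A, x e + ∑ e ∈ B \ A, x e := by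
      rw [h1]; exact Finset.sum_union Finset.disjoint_sdiff
    have hb2 : ∑ e ∈ B, x e = ∑ e ∈ A ∩ B, x e + ∑ e ∈ B \ A, x e := by
      conv_lhs => rw [h2]
      exact Finset.sum_union (Finset.disjoint_left.2 (by intro a ha hb; simp at ha hb; tauto))
    linarith
  have hsm := mrank_submodular M A B
  have hsm' : (mrank M ↑(A ∩ B) : ℝ) + (mrank M ↑(A ∪ B) : ℝ)
      ≤ (mrank M ↑A : ℝ) + (mrank M ↑B : ℝ) := by exact_mod_cast hsm
  have hI := hxP (A ∩ B)
  have hU := hxP (A ∪ B)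
  constructor <;> linarith
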